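/- In the recursive sink-removal decomposition, repeatedly selecting and removing a best sink from V produces an ordering (s_1, ..., s_p) such that the DAG assigning each s_i the best-scoring parent set within {s_1,...,s_{i-1}} (subject to the constraints) achieves bestScore(V). -/

import Mathlib

/-- `G` is a DAG on the node set `U`. -/
def DAGon {α : Type*} [DecidableEq α] (U : Finset α) (G : α → Finset α) : Prop :=
  (∀ v ∈ U, G v ⊆ U.erase v) ∧ (∀ v ∉ U, G v = ∅) ∧
    ∀ v, ¬ Relation.TransGen (fun u w : α => u ∈ G w) v v

/-- Best (supremum) score over all DAGs on `U`. -/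
noncomputable def bestScore {α : Type*} [DecidableEq α]
    (localscore : α → Finset α → ℝ) (U : Finset α) : ℝ :=
  sSup {x : ℝ | ∃ G : α → Finset α, DAGon U G ∧ x = ∑ v ∈ U, localscore v (G v)}

/-- `s` is a best sink of `U`. -/
def IsBestSink {α : Type*} [DecidableEq α] (localscore : α → Finset α → ℝ)
    (U : Finset α) (s : α) : Prop :=
  s ∈ U ∧ ∀ t ∈ U,
    bestScore localscore (U.erase t) +
        (U.erase t).powerset.sup' ⟨∅, Finset.empty_mem_powerset _⟩ (localscore t) ≤
      bestScore localscore (U.erase s) +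
        (U.erase s).powerset.sup' ⟨∅, Finset.empty_mem_powerset _⟩ (localscore s)

section Aux
set_option linter.unusedSectionVars false
variable {α : Type*} [DecidableEq α] (localscore : α → Finset α → ℝ)

/-- The set of achievable scores on `U`. -/
def Sset (U : Finset α) : Set ℝ :=
  {x : ℝ | ∃ G : α → Finset α, DAGon U G ∧ x = ∑ v ∈ U, localscore v (G v)}

lemma bestScore_eq_sSup (U : Finset α) :
    bestScore localscore U = sSup (Sset localscore U) := rfl

/-- Best local score for `v` with parents from `U`. -/
noncomputable def Mls (U : Finset α) (v : α) : ℝ :=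
  U.powerset.sup' ⟨∅, Finset.empty_mem_powerset _⟩ (localscore v)

/-- Score of the greedy chain. -/
noncomputable def chainScore : Finset α → List α → ℝ
  | _, [] => 0
  | p, s :: rest => Mls localscore p s + chainScore (insert s p) rest

@[simp] lemma chainScore_nil (p : Finset α) : chainScore localscore p [] = 0 := rfl

lemma chainScore_cons (p : Finset α) (s : α) (rest : List α) :
    chainScore localscore p (s :: rest) =
      Mls localscore p s + chainScore localscore (insert s p) rest := rfl

lemma chainScore_append (p : Finset α) (l : List α) (a : α) :
    chainScore localscore p (l ++ [a]) =
      chainScore localscore p l + Mls localscore (p ∪ l.toFinset) a := by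
  induction l generalizing p with
  | nil => simp [chainScore_cons]
  | cons s rest ih =>
      rw [List.cons_append, chainScore_cons, chainScore_cons, ih,
        List.toFinset_cons, Finset.union_insert, ← Finset.insert_union]
      ring

lemma empty_DAGon (U : Finset α) : DAGon U (fun _ => (∅ : Finset α)) := by
  refine ⟨fun v _ => Finset.empty_subset _, fun v _ => rfl, fun v h => ?_⟩
  rcases (Relation.transGen_iff _ _ _).1 h with h | ⟨c, _, h⟩ <;>
    exact absurd h (Finset.notMem_empty _)

lemma Sset_nonempty (U : Finset α) : (Sset localscore U).Nonempty :=
  ⟨_, fun _ => ∅, empty_DAGon U, rfl⟩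

lemma Sset_bddAbove (U : Finset α) : BddAbove (Sset localscore U) := by
  have hsub : Sset localscore U ⊆
      ↑((U.pi fun _ => U.powerset).image
        fun f => ∑ v ∈ U.attach, localscore v.1 (f v.1 v.2)) := by
    rintro x ⟨G, ⟨h1, _, _⟩, rfl⟩
    simp only [Finset.coe_image, Set.mem_image, Finset.mem_coe, Finset.mem_pi]
    refine ⟨fun v _ => G v, fun v hv => ?_, ?_⟩
    · exact Finset.mem_powerset.2 ((h1 v hv).trans (Finset.erase_subset _ _))
    · rw [← Finset.sum_attach U (fun v => localscore v (G v))]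
  exact Set.Finite.bddAbove ((Finset.finite_toSet _).subset hsub)

/-- Any DAG on a nonempty finite set has a sink. -/
lemma exists_sink (U : Finset α) (hU : U.Nonempty) (G : α → Finset α)
    (h : DAGon U G) : ∃ t ∈ U, ∀ w, t ∉ G w := by
  obtain ⟨h1, h2, h3⟩ := h
  set r : α → α → Prop := fun u w => u ∈ G w with hr
  letI : Preorder α :=
    { le := fun a b => a = b ∨ Relation.TransGen r a b
      lt := fun a b => Relation.TransGen r a b
      le_refl := fun a => Or.inl rfl
      le_trans := by
        rintro a b c (rfl | hab) (rfl | hbc)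
        · exact Or.inl rfl
        · exact Or.inr hbc
        · exact Or.inr hab
        · exact Or.inr (Relation.TransGen.trans hab hbc)
      lt_iff_le_not_ge := by
        intro a b
        constructor
        · intro hab
          refine ⟨Or.inr hab, ?_⟩
          rintro (rfl | hba)
          · exact h3 _ hab
          · exact h3 _ (Relation.TransGen.trans hab hba)
        · rintro ⟨(rfl | hab), hn⟩
          · exact absurd (Or.inl rfl) hn
          · exact hab }
  obtain ⟨m, hm, hmax⟩ := Finset.exists_maximal hU
  refine ⟨m, hm, fun w hw => ?_⟩
  have hwU : w ∈ U := by
    by_contra hwn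
    rw [h2 w hwn] at hw
    exact Finset.notMem_empty _ hw
  exact (lt_iff_le_not_ge.1 (Relation.TransGen.single hw : m < w)).2 (hmax hwU (Or.inr (Relation.TransGen.single hw)))

lemma tg_avoid {r r' : α → α → Prop} {a : α} (hout : ∀ w, ¬ r a w)
    (hstep : ∀ u w, r u w → w ≠ a → r' u w) {u w} (h : Relation.TransGen r u w) :
    w = a ∨ Relation.TransGen r' u w := by
  induction h with
  | single h =>
      rename_i w'
      by_cases hw : w' = a
      · exact Or.inl hw
      · exact Or.inr (Relation.TransGen.single (hstep _ _ h hw))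
  | tail h1 h2 ih =>
      rename_i x w'
      by_cases hw : w' = a
      · exact Or.inl hw
      · rcases ih with rfl | ih
        · exact absurd h2 (hout _)
        · exact Or.inr (ih.tail (hstep _ _ h2 hw))

lemma tg_src_ne {r : α → α → Prop} {a : α} (hout : ∀ w, ¬ r a w) {u w}
    (h : Relation.TransGen r u w) : u ≠ a := by
  induction h with
  | single h => rintro rfl; exact hout _ h
  | tail _ _ ih => exact ih

/-- Restriction of a DAG to `U.erase t` when `t` is a sink. -/
lemma restrict_DAGon (U : Finset α) (G : α → Finset α) (hG : DAGon U G)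
    (t : α) (hsink : ∀ w, t ∉ G w) :
    DAGon (U.erase t) (fun v => if v ∈ U.erase t then G v else ∅) ∧
      ∑ v ∈ U.erase t, localscore v
        ((fun v => if v ∈ U.erase t then G v else ∅) v) =
      ∑ v ∈ U.erase t, localscore v (G v) := by
  obtain ⟨h1, h2, h3⟩ := hG
  constructor
  · refine ⟨fun v hv => ?_, fun v hv => by simp only [if_neg hv], fun v hv => ?_⟩
    · simp only [if_pos hv]
      intro x hx
      have hvU : v ∈ U := Finset.mem_of_mem_erase hv
      have hxe := h1 v hvU hx
      refine Finset.mem_erase.2 ⟨Finset.ne_of_mem_erase hxe, Finset.mem_erase.2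
        ⟨fun hxt => hsink v (hxt ▸ hx), Finset.mem_of_mem_erase hxe⟩⟩
    · refine h3 v (hv.lift id fun u w h => show u ∈ G w from ?_)
      by_cases hw : w ∈ U.erase t
      · simpa only [if_pos hw] using h
      · simp only [if_neg hw] at h; exact absurd h (Finset.notMem_empty _)
  · exact Finset.sum_congr rfl fun v hv => by simp only [if_pos hv]

lemma prefix_sinks (l' : List α) (a : α)
    (hsinks : ∀ i (hi : i < (l' ++ [a]).length),
      IsBestSink localscore ((l' ++ [a]).take (i + 1)).toFinset
        ((l' ++ [a]).get ⟨i, hi⟩)) :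
    ∀ i (hi : i < l'.length),
      IsBestSink localscore (l'.take (i + 1)).toFinset (l'.get ⟨i, hi⟩) := by
  intro i hi
  have hi' : i < (l' ++ [a]).length := by simp; omega
  have h := hsinks i hi'
  rwa [List.take_append_of_le_length (by omega),
    show (l' ++ [a]).get ⟨i, hi'⟩ = l'.get ⟨i, hi⟩ from List.getElem_append_left hi] at h

lemma toFinset_concat (l : List α) (a : α) :
    (l ++ [a]).toFinset = insert a l.toFinset := by
  ext x; simp [or_comm]

/-- The key induction: the chain score is the greatest achievable score. -/
lemma chain_greatest (l : List α) (hnd : l.Nodup)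
    (hsinks : ∀ i (hi : i < l.length),
      IsBestSink localscore (l.take (i + 1)).toFinset (l.get ⟨i, hi⟩)) :
    IsGreatest (Sset localscore l.toFinset) (chainScore localscore ∅ l) := by
  induction l using List.reverseRecOn with
  | nil =>
      constructor
      · exact ⟨fun _ => ∅, empty_DAGon _, by simp⟩
      · rintro x ⟨G, _, rfl⟩; simp
  | append_singleton l' a ih =>
      have hnd' : l'.Nodup := (List.nodup_append.1 hnd).1
      have haT : a ∉ l'.toFinset := by
        rw [List.mem_toFinset]
        intro hmem
        exact (List.nodup_append.1 hnd).2.2 a hmem a (List.mem_singleton_self a) rfl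
      obtain ⟨ihmem, ihub⟩ := ih hnd' (prefix_sinks localscore l' a hsinks)
      set T := l'.toFinset with hT
      have hUT : (l' ++ [a]).toFinset = insert a T := toFinset_concat l' a
      have hchain : chainScore localscore ∅ (l' ++ [a]) =
          chainScore localscore ∅ l' + Mls localscore T a := by
        rw [chainScore_append, Finset.empty_union]
      -- the best-sink property of `a` on the full set
      have hlen : l'.length < (l' ++ [a]).length := by simp
      have hsa := hsinks l'.length hlen
      rw [List.take_of_length_le (by simp),
        show (l' ++ [a]).get ⟨l'.length, hlen⟩ = a from
          List.getElem_concat_length rfl hlen, hUT] at hsa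
      have hbestT : bestScore localscore T = chainScore localscore ∅ l' :=
        IsGreatest.csSup_eq ⟨ihmem, ihub⟩
      rw [hUT, hchain]
      constructor
      · -- membership: extend the best DAG on T by `a` with best parents
        obtain ⟨G', hG'dag, hG'sum⟩ := ihmem
        obtain ⟨g, hgmem, hgval⟩ := Finset.exists_mem_eq_sup'
          (⟨∅, Finset.empty_mem_powerset _⟩ : (T.powerset).Nonempty) (localscore a)
        have hgsub : g ⊆ T := Finset.mem_powerset.1 hgmem
        obtain ⟨hd1, hd2, hd3⟩ := hG'dag
        set Gx : α → Finset α := fun v => if v = a then g else G' v with hGx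
        have hGxa : Gx a = g := if_pos rfl
        have hGxne : ∀ v, v ≠ a → Gx v = G' v := fun v hv => if_neg hv
        have hnoA : ∀ w, a ∉ Gx w := by
          intro w hw
          by_cases hwa : w = a
          · rw [hwa, hGxa] at hw
            exact haT (hgsub hw)
          · rw [hGxne w hwa] at hw
            by_cases hwT : w ∈ T
            · exact haT (Finset.mem_of_mem_erase (hd1 w hwT hw))
            · rw [hd2 w hwT] at hw; exact Finset.notMem_empty _ hw
        refine ⟨Gx, ⟨?_, ?_, ?_⟩, ?_⟩
        · intro v hv
          rcases Finset.mem_insert.1 hv with rfl | hvT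
          · rw [hGxa]
            intro x hx
            exact Finset.mem_erase.2 ⟨fun h => haT (h ▸ hgsub hx),
              Finset.mem_insert_of_mem (hgsub hx)⟩
          · have hva : v ≠ a := fun h => haT (h ▸ hvT)
            rw [hGxne v hva]
            intro x hx
            have := hd1 v hvT hx
            exact Finset.mem_erase.2 ⟨Finset.ne_of_mem_erase this,
              Finset.mem_insert_of_mem (Finset.mem_of_mem_erase this)⟩
        · intro v hv
          have hva : v ≠ a := fun h => hv (h ▸ Finset.mem_insert_self a T)
          have hvT : v ∉ T := fun h => hv (Finset.mem_insert_of_mem h)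
          rw [hGxne v hva]; exact hd2 v hvT
        · intro v hv
          have hout : ∀ w, ¬ (fun u w => u ∈ Gx w) a w := fun w => hnoA w
          have hstep : ∀ u w, (fun u w => u ∈ Gx w) u w → w ≠ a →
              (fun u w => u ∈ G' w) u w := by
            intro u w h hw
            rwa [hGxne w hw] at h
          rcases tg_avoid hout hstep hv with rfl | hv'
          · exact tg_src_ne hout hv rfl
          · exact hd3 v hv'
        · rw [Finset.sum_insert haT]
          have hsum : ∑ v ∈ T, localscore v (Gx v) = ∑ v ∈ T, localscore v (G' v) :=
            Finset.sum_congr rfl fun v hvT => by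
              rw [hGxne v (fun h => haT (h ▸ hvT))]
          rw [hsum, hGxa, ← hG'sum, ← hgval]
          unfold Mls
          ring
      · -- upper bound
        rintro x ⟨G'', hG''dag, rfl⟩
        set U : Finset α := insert a T with hU
        have hUne : U.Nonempty := ⟨a, Finset.mem_insert_self a T⟩
        obtain ⟨t, htU, htsink⟩ := exists_sink U hUne G'' hG''dag
        obtain ⟨hrdag, hrsum⟩ := restrict_DAGon localscore U G'' hG''dag t htsink
        have hsplit : ∑ v ∈ U, localscore v (G'' v) =
            ∑ v ∈ U.erase t, localscore v (G'' v) + localscore t (G'' t) := by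
          rw [← Finset.add_sum_erase U _ htU]; ring
        have h1 : ∑ v ∈ U.erase t, localscore v (G'' v) ≤
            bestScore localscore (U.erase t) := by
          rw [bestScore_eq_sSup]
          exact le_csSup (Sset_bddAbove localscore _) ⟨_, hrdag, hrsum.symm⟩
        have h2 : localscore t (G'' t) ≤ Mls localscore (U.erase t) t := by
          apply Finset.le_sup' (localscore t)
          exact Finset.mem_powerset.2 (hG''dag.1 t htU)
        have h3 := hsa.2 t htU
        have herase : U.erase a = T := by rw [hU]; exact Finset.erase_insert haT
        calc ∑ v ∈ U, localscore v (G'' v)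
            ≤ bestScore localscore (U.erase t) + Mls localscore (U.erase t) t := by
              rw [hsplit]; exact add_le_add h1 h2
          _ ≤ bestScore localscore (U.erase a) + Mls localscore (U.erase a) a := h3
          _ = bestScore localscore T + Mls localscore T a := by rw [herase]
          _ = chainScore localscore ∅ l' + Mls localscore T a := by rw [hbestT]

lemma sum_eq_chain (l : List α) (G : α → Finset α)
    (hG : ∀ i (hi : i < l.length),
      localscore (l.get ⟨i, hi⟩) (G (l.get ⟨i, hi⟩)) =
        Mls localscore (l.take i).toFinset (l.get ⟨i, hi⟩)) :
    (l.map fun v => localscore v (G v)).sum = chainScore localscore ∅ l := by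
  induction l using List.reverseRecOn with
  | nil => simp
  | append_singleton l' a ih =>
      have hlen : l'.length < (l' ++ [a]).length := by simp
      have ha := hG l'.length hlen
      rw [show (l' ++ [a]).get ⟨l'.length, hlen⟩ = a from
        List.getElem_concat_length rfl hlen, List.take_left] at ha
      have hG' : ∀ i (hi : i < l'.length),
          localscore (l'.get ⟨i, hi⟩) (G (l'.get ⟨i, hi⟩)) =
            Mls localscore (l'.take i).toFinset (l'.get ⟨i, hi⟩) := by
        intro i hi
        have hi' : i < (l' ++ [a]).length := by simp; omega
        have h := hG i hi'
        rwa [List.take_append_of_le_length (by omega),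
          show (l' ++ [a]).get ⟨i, hi'⟩ = l'.get ⟨i, hi⟩ from
            List.getElem_append_left hi] at h
      rw [List.map_append, List.sum_append, chainScore_append, ih hG',
        Finset.empty_union]
      simp [ha]

end Aux

theorem stmt_16 {α : Type*} [DecidableEq α] (localscore : α → Finset α → ℝ)
    (V : Finset α) (l : List α) (hnd : l.Nodup) (hall : l.toFinset = V)
    -- each `s_i` is a best sink of the set `{s_1, ..., s_i}`
    (hsinks : ∀ i (hi : i < l.length),
      IsBestSink localscore (l.take (i + 1)).toFinset (l.get ⟨i, hi⟩))
    (G : α → Finset α)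
    -- `G` assigns to each `s_i` a best-scoring parent set within `{s_1, ..., s_{i-1}}`
    (hG : ∀ i (hi : i < l.length),
      G (l.get ⟨i, hi⟩) ⊆ (l.take i).toFinset ∧
        localscore (l.get ⟨i, hi⟩) (G (l.get ⟨i, hi⟩)) =
          ((l.take i).toFinset.powerset).sup' ⟨∅, Finset.empty_mem_powerset _⟩
            (localscore (l.get ⟨i, hi⟩))) :
    ∑ v ∈ V, localscore v (G v) = bestScore localscore V := by
  subst hall
  rw [bestScore_eq_sSup, (chain_greatest localscore l hnd hsinks).csSup_eq,
    List.sum_toFinset _ hnd]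
  exact sum_eq_chain localscore l G fun i hi => (hG i hi).2
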